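/- The fundamental domain $\Omega_H$ is the disjoint union of the sets $\Omega_H^{\{j\}}$ for $j = 1, \ldots, d+1$; that is, $\Omega_H = \bigcup_{j=1}^{d+1} \Omega_H^{\{j\}}$ and $\Omega_H^{\{i\}} \cap \Omega_H^{\{j\}} = \emptyset$ for $i \ne j$. -/

import Mathlib

/-- The half-open fundamental domain of the lattice `A_d`. -/
def OmegaH (d : ℕ) : Set (Fin (d + 1) → ℝ) :=
  {t | (∑ i, t i = 0) ∧ ∀ i j : Fin (d + 1), i < j → -1 < t i - t j ∧ t i - t j ≤ 1}

/-- The `j`-th parallelepiped piece of the fundamental domain. -/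
def OmegaHpart (d : ℕ) (j : Fin (d + 1)) : Set (Fin (d + 1) → ℝ) :=
  {t | (∑ i, t i = 0) ∧ (∀ i : Fin (d + 1), i < j → 0 < t i - t j ∧ t i - t j ≤ 1) ∧
    ∀ l : Fin (d + 1), j < l → 0 ≤ t l - t j ∧ t l - t j < 1}

/-- `Ω_H` is the disjoint union of the pieces `Ω_H^{j}`, `j = 1, …, d+1`. -/
theorem OmegaH_eq_disjUnion (d : ℕ) :
    (OmegaH d = ⋃ j : Fin (d + 1), OmegaHpart d j) ∧
    ∀ i j : Fin (d + 1), i ≠ j → OmegaHpart d i ∩ OmegaHpart d j = ∅ := by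
  classical
  constructor
  · ext t
    simp only [Set.mem_iUnion]
    constructor
    · rintro ⟨hs, h⟩
      set S := Finset.univ.filter (fun i : Fin (d + 1) => ∀ k, t i ≤ t k) with hS
      have hSne : S.Nonempty := by
        obtain ⟨i, _, hi⟩ := Finset.exists_min_image Finset.univ t ⟨0, Finset.mem_univ 0⟩
        exact ⟨i, by
          simp only [hS, Finset.mem_filter, Finset.mem_univ, true_and]
          exact fun k => hi k (Finset.mem_univ k)⟩
      set j := S.min' hSne with hj
      have hjS : j ∈ S := S.min'_mem hSne
      have hjmin : ∀ k, t j ≤ t k := by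
        simpa only [hS, Finset.mem_filter, Finset.mem_univ, true_and] using hjS
      refine ⟨j, hs, ?_, ?_⟩
      · intro i hij
        have h1 : t j ≤ t i := hjmin i
        have hne : t j ≠ t i := by
          intro he
          have hiS : i ∈ S := by
            simp only [hS, Finset.mem_filter, Finset.mem_univ, true_and]
            intro k
            rw [← he]; exact hjmin k
          have := S.min'_le i hiS
          exact absurd hij (by rw [← hj] at this; exact not_lt.mpr this)
        exact ⟨by have := lt_of_le_of_ne h1 hne; linarith, (h i j hij).2⟩
      · intro l hjl
        have := (h j l hjl).1
        exact ⟨by linarith [hjmin l], by linarith⟩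
    · rintro ⟨j, hs, h1, h2⟩
      refine ⟨hs, fun i l hil => ?_⟩
      rcases lt_trichotomy i j with hi | hi | hi <;>
        rcases lt_trichotomy l j with hl | hl | hl
      · have a := h1 i hi; have b := h1 l hl
        exact ⟨by linarith [a.1, b.2], by linarith [a.2, b.1]⟩
      · subst hl; have a := h1 i hi
        exact ⟨by linarith [a.1], a.2⟩
      · have a := h1 i hi; have b := h2 l hl
        exact ⟨by linarith [a.1, b.2], by linarith [a.2, b.1]⟩
      · subst hi; exact absurd hil (not_lt.mpr hl.le)
      · subst hi; subst hl; exact absurd hil (lt_irrefl _)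
      · subst hi; have b := h2 l hl
        exact ⟨by linarith [b.2], by linarith [b.1]⟩
      · exact absurd (hl.trans hi) (not_lt.mpr hil.le)
      · subst hl; exact absurd hi (not_lt.mpr hil.le)
      · have a := h2 i hi; have b := h2 l hl
        exact ⟨by linarith [a.1, b.2], by linarith [a.2, b.1]⟩
  · intro i j hne
    ext t
    simp only [Set.mem_inter_iff, Set.mem_empty_iff_false, iff_false]
    rintro ⟨⟨_, hi1, hi2⟩, ⟨_, hj1, hj2⟩⟩
    rcases hne.lt_or_gt with hlt | hlt
    · have a := (hj1 i hlt).1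
      have b := (hi2 j hlt).1
      linarith
    · have a := (hi1 j hlt).1
      have b := (hj2 i hlt).1
      linarith
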